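/- Validity of the time-indexed synchronization cut: let visits u and v each be started exactly once, with u started at time t_u and v at time t_v, encoded by indicator families (X_{u^t})_t and (X_{v^t})_t with Σ_t X_{u^t} = 1, X_{u^{t_u}} = 1, Σ_t X_{v^t} = 1, X_{v^{t_v}} = 1, and let p ∈ {0,1} indicate t_u ≤ t_v. Then the family of constraints p + X_{u^t} + Σ_{ℓ ∉ [t + δ^min, t + δ^max]} X_{v^ℓ} ≤ 2 for all t holds for all t if and only if (p = 1 implies t_v ∈ [t_u + δ^min, t_u + δ^max]). -/
import Mathlib


/-- Validity of the time-indexed synchronization cut. -/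
theorem time_indexed_sync_cut_valid
    (T : Finset ℤ) (Xu Xv : ℤ → ℕ) (tu tv : ℤ) (p : ℕ) (δmin δmax : ℤ)
    (hδ : δmin ≤ δmax) (hp : p = 0 ∨ p = 1)
    (htu : tu ∈ T) (htv : tv ∈ T)
    (hXu1 : ∑ t ∈ T, Xu t = 1) (hXutu : Xu tu = 1)
    (hXv1 : ∑ t ∈ T, Xv t = 1) (hXvtv : Xv tv = 1)
    (hpsem : p = 1 ↔ tu ≤ tv) :
    ((∀ t ∈ T,
        p + Xu t +
          ∑ ℓ ∈ T.filter (fun ℓ => ℓ < t + δmin ∨ t + δmax < ℓ), Xv ℓ ≤ 2) ↔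
      (p = 1 → tu + δmin ≤ tv ∧ tv ≤ tu + δmax)) := by
  have hXu0 : ∀ t ∈ T, t ≠ tu → Xu t = 0 := by
    intro t ht htne
    have h := Finset.add_sum_erase T Xu htu
    rw [hXu1, hXutu] at h
    have h0 : ∑ x ∈ T.erase tu, Xu x = 0 := by omega
    exact Finset.sum_eq_zero_iff.mp h0 t (Finset.mem_erase.mpr ⟨htne, ht⟩)
  have hXv0 : ∀ t ∈ T, t ≠ tv → Xv t = 0 := by
    intro t ht htne
    have h := Finset.add_sum_erase T Xv htv
    rw [hXv1, hXvtv] at h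
    have h0 : ∑ x ∈ T.erase tv, Xv x = 0 := by omega
    exact Finset.sum_eq_zero_iff.mp h0 t (Finset.mem_erase.mpr ⟨htne, ht⟩)
  constructor
  · intro hcon hp1
    have h := hcon tu htu
    rw [hXutu, hp1] at h
    have hsum0 : ∑ ℓ ∈ T.filter (fun ℓ => ℓ < tu + δmin ∨ tu + δmax < ℓ), Xv ℓ = 0 := by
      omega
    by_contra hc
    have hmem : tv ∈ T.filter (fun ℓ => ℓ < tu + δmin ∨ tu + δmax < ℓ) := by
      simp only [Finset.mem_filter]
      exact ⟨htv, by omega⟩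
    have := Finset.sum_eq_zero_iff.mp hsum0 tv hmem
    omega
  · intro himp t ht
    have hfle : ∑ ℓ ∈ T.filter (fun ℓ => ℓ < t + δmin ∨ t + δmax < ℓ), Xv ℓ ≤ 1 := by
      calc ∑ ℓ ∈ T.filter (fun ℓ => ℓ < t + δmin ∨ t + δmax < ℓ), Xv ℓ
          ≤ ∑ ℓ ∈ T, Xv ℓ :=
            Finset.sum_le_sum_of_subset (Finset.filter_subset _ _)
        _ = 1 := hXv1
    rcases hp with hp0 | hp1
    · have hXule : Xu t ≤ 1 := by
        calc Xu t ≤ ∑ s ∈ T, Xu s :=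
              Finset.single_le_sum (fun i _ => Nat.zero_le _) ht
          _ = 1 := hXu1
      omega
    · have hb := himp hp1
      by_cases htt : t = tu
      · subst htt
        have hsum0 : ∑ ℓ ∈ T.filter (fun ℓ => ℓ < t + δmin ∨ t + δmax < ℓ), Xv ℓ = 0 := by
          apply Finset.sum_eq_zero
          intro ℓ hℓ
          rw [Finset.mem_filter] at hℓ
          exact hXv0 ℓ hℓ.1 (by omega)
        rw [hXutu, hsum0, hp1]
      · have := hXu0 t ht htt
        omega
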